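/- Let μ be a Borel measure on ℂ with infinite support such that ∫ |z|^m dμ(z) < ∞ for every m ∈ ℕ. For n ∈ ℕ let M(n;μ) be the (n+1)×(n+1) complex matrix with entries M_{j,k} = ∫ z^j·conj(z)^k dμ(z) for j,k ∈ {0,…,n}. Then det M(n;μ) = ∏_{j=0}^n m_j(μ), where m_j(μ) = inf{ ∫ |p(z)|² dμ(z) : p a monic complex polynomial of degree j }; in particular each m_j(μ) > 0 and det M(n;μ) > 0. -/

import Mathlib

open MeasureTheory

/-- The squared `L²(μ)`-norm of the monic orthogonal polynomial of degree `j` w.r.t. `μ`: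
the infimum of `∫ |p|² dμ` over monic complex polynomials `p` of degree `j`. -/
noncomputable def minMonicNorm (μ : Measure ℂ) (j : ℕ) : ℝ :=
  sInf {I : ℝ | ∃ p : Polynomial ℂ, p.Monic ∧ p.natDegree = j ∧
    I = ∫ z, ‖p.eval z‖ ^ 2 ∂μ}

namespace Stmt13Aux

open Polynomial Submodule Set InnerProductSpace

local notation "⟪" x ", " y "⟫" => @inner ℂ _ _ x y

variable (μ : Measure ℂ)

/-- Moment integrability -/
lemma int_abs_pow (hmom : ∀ m : ℕ, (∫⁻ z, ENNReal.ofReal (‖z‖ ^ m) ∂μ) < ⊤)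
    (m : ℕ) : Integrable (fun z => ‖z‖ ^ m) μ := by
  constructor
  · exact (continuous_norm.pow m).aestronglyMeasurable
  · rw [hasFiniteIntegral_iff_ofReal (Filter.Eventually.of_forall fun z => by positivity)]
    exact hmom m

lemma memL2 (hmom : ∀ m : ℕ, (∫⁻ z, ENNReal.ofReal (‖z‖ ^ m) ∂μ) < ⊤)
    (p : Polynomial ℂ) : MemLp (fun z => p.eval z) 2 μ := by
  induction p using Polynomial.induction_on' with
  | add p q hp hq =>
      have h : (fun z => (p + q).eval z) = (fun z => p.eval z) + (fun z => q.eval z) := by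
        funext z; simp
      rw [h]; exact hp.add hq
  | monomial i c =>
      have hbase : MemLp (fun z : ℂ => z ^ i) 2 μ := by
        have hmeas : AEStronglyMeasurable (fun z : ℂ => z ^ i) μ :=
          (continuous_pow i).aestronglyMeasurable
        rw [memLp_two_iff_integrable_sq_norm hmeas]
        refine (int_abs_pow μ hmom (2 * i)).congr ?_
        filter_upwards with z
        simp [← pow_mul, mul_comm]
      exact MemLp.ae_eq (Filter.Eventually.of_forall fun z => by
        simp [Polynomial.eval_monomial]) (hbase.const_mul c)

lemma toLp_congr {f g : ℂ → ℂ} (hf : MemLp f 2 μ) (hg : MemLp g 2 μ) (h : f = g) :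
    hf.toLp f = hg.toLp g := by subst h; rfl

/-- The linear map sending a polynomial to its class in `L²(μ)`. -/
noncomputable def P2 (hmom : ∀ m : ℕ, (∫⁻ z, ENNReal.ofReal (‖z‖ ^ m) ∂μ) < ⊤) :
    Polynomial ℂ →ₗ[ℂ] Lp ℂ 2 μ where
  toFun p := (memL2 μ hmom p).toLp _
  map_add' p q := by
    have h : (fun z => (p + q).eval z) = (fun z => p.eval z) + (fun z => q.eval z) := by
      funext z; simp
    rw [toLp_congr μ (memL2 μ hmom (p + q)) ((memL2 μ hmom p).add (memL2 μ hmom q)) h,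
      MemLp.toLp_add]
  map_smul' c p := by
    have h : (fun z => (c • p).eval z) = c • (fun z => p.eval z) := by
      funext z; simp [Polynomial.eval_smul, smul_eq_mul]
    simp only [RingHom.id_apply]
    rw [toLp_congr μ (memL2 μ hmom (c • p)) ((memL2 μ hmom p).const_smul c) h,
      MemLp.toLp_const_smul]

variable (hmom : ∀ m : ℕ, (∫⁻ z, ENNReal.ofReal (‖z‖ ^ m) ∂μ) < ⊤)

include hmom

lemma inner_P2 (p q : Polynomial ℂ) :
    ⟪P2 μ hmom p, P2 μ hmom q⟫ =
      ∫ z, (starRingEnd ℂ) (p.eval z) * q.eval z ∂μ := by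
  rw [L2.inner_def]
  refine integral_congr_ae ?_
  filter_upwards [(memL2 μ hmom p).coeFn_toLp, (memL2 μ hmom q).coeFn_toLp] with z h1 h2
  simp only [P2, LinearMap.coe_mk, AddHom.coe_mk] at h1 h2 ⊢
  rw [h1, h2, RCLike.inner_apply, mul_comm]

lemma norm_sq_P2 (p : Polynomial ℂ) :
    ‖P2 μ hmom p‖ ^ 2 = ∫ z, ‖p.eval z‖ ^ 2 ∂μ := by
  have h2 : ⟪P2 μ hmom p, P2 μ hmom p⟫ = ((‖P2 μ hmom p‖ : ℂ)) ^ 2 :=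
    inner_self_eq_norm_sq_to_K _
  rw [inner_P2] at h2
  have h3 : ∫ z, (starRingEnd ℂ) (p.eval z) * p.eval z ∂μ
      = ((∫ z, ‖p.eval z‖ ^ 2 ∂μ : ℝ) : ℂ) :=
    calc ∫ z, (starRingEnd ℂ) (p.eval z) * p.eval z ∂μ
        = ∫ z, ((‖p.eval z‖ ^ 2 : ℝ) : ℂ) ∂μ := by
          refine integral_congr_ae (Filter.Eventually.of_forall fun z => ?_)
          show (starRingEnd ℂ) (p.eval z) * p.eval z = ((‖p.eval z‖ ^ 2 : ℝ) : ℂ)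
          rw [mul_comm, Complex.mul_conj, Complex.sq_norm]
      _ = ((∫ z, ‖p.eval z‖ ^ 2 ∂μ : ℝ) : ℂ) := integral_ofReal
  rw [h3] at h2
  exact_mod_cast h2.symm

/-- The monomial family in `L²(μ)`. -/
noncomputable def vFam : ℕ → Lp ℂ 2 μ := fun i => P2 μ hmom ((X : Polynomial ℂ) ^ i)

lemma vFam_def (i : ℕ) : vFam μ hmom i = P2 μ hmom ((X : Polynomial ℂ) ^ i) := rfl

/-- Gram–Schmidt orthogonalization of the monomials. -/
noncomputable def gFam : ℕ → Lp ℂ 2 μ := gramSchmidt ℂ (vFam μ hmom)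

lemma gFam_def : gFam μ hmom = gramSchmidt ℂ (vFam μ hmom) := rfl

lemma span_eq (j : ℕ) :
    span ℂ (vFam μ hmom '' Set.Iio j) = (degreeLT ℂ j).map (P2 μ hmom) := by
  classical
  rw [degreeLT_eq_span_X_pow, Submodule.map_span]
  congr 1
  ext u
  simp only [Finset.coe_image, Finset.coe_range, Set.image_image, vFam]
  exact Iff.rfl

lemma mem_span_lt {r : Polynomial ℂ} {j : ℕ} (hr : r.degree < (j : ℕ)) :
    P2 μ hmom r ∈ span ℂ (vFam μ hmom '' Set.Iio j) := by
  rw [span_eq]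
  exact Submodule.mem_map_of_mem (Polynomial.mem_degreeLT.2 hr)

lemma sub_gS_mem (j : ℕ) :
    vFam μ hmom j - gFam μ hmom j ∈ span ℂ (vFam μ hmom '' Set.Iio j) := by
  rw [← span_gramSchmidt_Iio ℂ (vFam μ hmom) j]
  have hdef := gramSchmidt_def' ℂ (vFam μ hmom) j
  have heq : vFam μ hmom j - gFam μ hmom j
      = ∑ i ∈ Finset.Iio j,
          (ℂ ∙ gramSchmidt ℂ (vFam μ hmom) i).starProjection (vFam μ hmom j) := by
    rw [gFam_def]
    nth_rewrite 1 [hdef]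
    abel
  rw [heq]
  refine Submodule.sum_mem _ fun i hi => ?_
  have hmem : (ℂ ∙ gramSchmidt ℂ (vFam μ hmom) i).starProjection (vFam μ hmom j) ∈ ℂ ∙ gramSchmidt ℂ (vFam μ hmom) i := Submodule.starProjection_apply_mem _ _
  refine Submodule.span_mono ?_ hmem
  rw [Set.singleton_subset_iff]
  exact Set.mem_image_of_mem _ (Finset.mem_Iio.1 hi)

lemma gS_orth (j : ℕ) {u : Lp ℂ 2 μ} (hu : u ∈ span ℂ (vFam μ hmom '' Set.Iio j)) :
    ⟪gFam μ hmom j, u⟫ = 0 := by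
  rw [← span_gramSchmidt_Iio ℂ (vFam μ hmom) j] at hu
  induction hu using Submodule.span_induction with
  | mem x hx =>
      obtain ⟨i, hi, rfl⟩ := hx
      exact gramSchmidt_orthogonal ℂ (vFam μ hmom) (ne_of_gt hi)
  | zero => exact inner_zero_right _
  | add x y _ _ hx hy => rw [inner_add_right, hx, hy, add_zero]
  | smul c x _ hx => rw [inner_smul_right, hx, mul_zero]

lemma norm_sq_le (j : ℕ) {u : Lp ℂ 2 μ} (hu : u ∈ span ℂ (vFam μ hmom '' Set.Iio j)) :
    ‖gFam μ hmom j‖ ^ 2 ≤ ‖gFam μ hmom j + u‖ ^ 2 := by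
  rw [norm_add_sq (𝕜 := ℂ), gS_orth μ hmom j hu]
  simp only [map_zero, mul_zero, add_zero]
  nlinarith [sq_nonneg ‖u‖]

lemma isLeast_min (j : ℕ) :
    IsLeast {I : ℝ | ∃ p : Polynomial ℂ, p.Monic ∧ p.natDegree = j ∧
        I = ∫ z, ‖p.eval z‖ ^ 2 ∂μ} (‖gFam μ hmom j‖ ^ 2) := by
  constructor
  · -- membership: the Gram–Schmidt vector is represented by a monic polynomial
    have hmem := sub_gS_mem μ hmom j
    rw [span_eq] at hmem
    obtain ⟨r, hr, hrep⟩ := hmem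
    have hrd : r.degree < ((X : Polynomial ℂ) ^ j).degree := by
      rw [Polynomial.degree_X_pow]
      exact Polynomial.mem_degreeLT.1 hr
    have hrd' : r.degree < (j : ℕ) := by
      rw [Polynomial.degree_X_pow] at hrd; exact hrd
    refine ⟨(X : Polynomial ℂ) ^ j - r, Polynomial.monic_X_pow_sub hrd', ?_, ?_⟩
    · rw [Polynomial.natDegree_eq_of_degree_eq (Polynomial.degree_sub_eq_left_of_degree_lt hrd),
        Polynomial.natDegree_X_pow]
    · have hPg : P2 μ hmom ((X : Polynomial ℂ) ^ j - r) = gFam μ hmom j := by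
        rw [map_sub, hrep, ← vFam_def]
        exact sub_sub_cancel _ _
      rw [← norm_sq_P2 μ hmom, hPg]
  · rintro I ⟨p, hmonic, hdeg, rfl⟩
    have hpdeg : p.degree = ((X : Polynomial ℂ) ^ j).degree := by
      rw [Polynomial.degree_X_pow, Polynomial.degree_eq_natDegree hmonic.ne_zero, hdeg]
    have hlc : p.leadingCoeff = ((X : Polynomial ℂ) ^ j).leadingCoeff := by
      rw [hmonic.leadingCoeff, (Polynomial.monic_X_pow j).leadingCoeff]
    have hsubdeg : (p - (X : Polynomial ℂ) ^ j).degree < (j : ℕ) := by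
      have h := Polynomial.degree_sub_lt hpdeg hmonic.ne_zero hlc
      rwa [hpdeg, Polynomial.degree_X_pow] at h
    have hmem : P2 μ hmom (p - (X : Polynomial ℂ) ^ j)
        ∈ span ℂ (vFam μ hmom '' Set.Iio j) := mem_span_lt μ hmom hsubdeg
    have hvv : vFam μ hmom j = P2 μ hmom ((X : Polynomial ℂ) ^ j) := rfl
    have hrepr : P2 μ hmom p = gFam μ hmom j
        + ((vFam μ hmom j - gFam μ hmom j) + P2 μ hmom (p - (X : Polynomial ℂ) ^ j)) := by
      rw [map_sub, hvv]
      abel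
    rw [← norm_sq_P2 μ hmom, hrepr]
    exact norm_sq_le μ hmom j (Submodule.add_mem _ (sub_gS_mem μ hmom j) hmem)

lemma minMonicNorm_eq (j : ℕ) : minMonicNorm μ j = ‖gFam μ hmom j‖ ^ 2 :=
  (isLeast_min μ hmom j).csInf_eq

variable (hsupp : {x : ℂ | ∀ U ∈ nhds x, 0 < μ U}.Infinite)

include hsupp

lemma integral_sq_pos {p : Polynomial ℂ} (hp : p ≠ 0) :
    0 < ∫ z, ‖p.eval z‖ ^ 2 ∂μ := by
  have hcont : Continuous fun z : ℂ => p.eval z := p.continuous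
  have hint : Integrable (fun z => ‖p.eval z‖ ^ 2) μ := by
    have h := (memLp_two_iff_integrable_sq_norm hcont.aestronglyMeasurable).1 (memL2 μ hmom p)
    refine h.congr (Filter.Eventually.of_forall fun z => ?_)
    simp
  rw [integral_pos_iff_support_of_nonneg (fun z => by positivity) hint]
  have hsuppf : Function.support (fun z => ‖p.eval z‖ ^ 2)
      = {z : ℂ | p.eval z ≠ 0} := by
    ext z
    simp [Function.mem_support, pow_eq_zero_iff, _root_.map_eq_zero]
  rw [hsuppf]
  rcases eq_or_ne (μ {z : ℂ | p.eval z ≠ 0}) 0 with h0 | h0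
  · exfalso
    have hopen : IsOpen {z : ℂ | p.eval z ≠ 0} :=
      isOpen_compl_singleton.preimage hcont
    have hsub : {x : ℂ | ∀ U ∈ nhds x, 0 < μ U} ⊆ {x : ℂ | p.IsRoot x} := by
      intro x hx
      by_contra hroot
      have hmem : {z : ℂ | p.eval z ≠ 0} ∈ nhds x :=
        hopen.mem_nhds (by simpa [Polynomial.IsRoot] using hroot)
      exact absurd h0 (hx _ hmem).ne'
    exact hsupp ((Polynomial.finite_setOf_isRoot hp).subset hsub)
  · exact h0.bot_lt

lemma P2_ne_zero {p : Polynomial ℂ} (hp : p ≠ 0) : P2 μ hmom p ≠ 0 := by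
  intro h
  have hn := norm_sq_P2 μ hmom p
  rw [h, norm_zero] at hn
  have hpos := integral_sq_pos μ hmom hsupp hp
  rw [← hn] at hpos
  simpa using hpos

lemma linIndep : LinearIndependent ℂ (vFam μ hmom) := by
  have hX : LinearIndependent ℂ (fun i : ℕ => (X : Polynomial ℂ) ^ i) := by
    rw [linearIndependent_iff']
    intro s c h i hi
    have hc := congrArg (fun q : Polynomial ℂ => q.coeff i) h
    simp only [Polynomial.finset_sum_coeff, Polynomial.coeff_smul, Polynomial.coeff_X_pow,
      smul_eq_mul, mul_ite, mul_one, mul_zero, Polynomial.coeff_zero] at hc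
    rwa [Finset.sum_ite_eq s i c, if_pos hi] at hc
  have hker : LinearMap.ker (P2 μ hmom) = ⊥ := by
    rw [LinearMap.ker_eq_bot']
    intro p hp
    by_contra hne
    exact P2_ne_zero μ hmom hsupp hne hp
  exact hX.map' (P2 μ hmom) hker

lemma minMonicNorm_pos (j : ℕ) : 0 < minMonicNorm μ j := by
  rw [minMonicNorm_eq μ hmom j]
  have hne : gFam μ hmom j ≠ 0 :=
    gramSchmidt_ne_zero j (linIndep μ hmom hsupp)
  exact pow_pos (norm_pos_iff.mpr hne) 2

end Stmt13Aux

open Stmt13Aux Polynomial Submodule InnerProductSpace in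
/-- For a measure `μ` on `ℂ` with infinite support and all moments finite, the determinant
of the moment matrix `M_{j,k} = ∫ z^j conj(z)^k dμ` equals `∏_{j=0}^n m_j(μ)`, where
`m_j(μ)` is the least squared `L²(μ)`-norm of a monic polynomial of degree `j`; in
particular each `m_j(μ) > 0` and the determinant is positive. -/
theorem stmt_13 (μ : Measure ℂ)
    (hsupp : {x : ℂ | ∀ U ∈ nhds x, 0 < μ U}.Infinite)
    (hmom : ∀ m : ℕ, (∫⁻ z, ENNReal.ofReal (‖z‖ ^ m) ∂μ) < ⊤)
    (n : ℕ) (M : Matrix (Fin (n + 1)) (Fin (n + 1)) ℂ)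
    (hM : ∀ j k : Fin (n + 1),
      M j k = ∫ z, z ^ (j : ℕ) * (starRingEnd ℂ z) ^ (k : ℕ) ∂μ) :
    (∀ j : Fin (n + 1), 0 < minMonicNorm μ (j : ℕ)) ∧
    M.det = ∏ j : Fin (n + 1), ((minMonicNorm μ (j : ℕ) : ℝ) : ℂ) ∧
    0 < ∏ j : Fin (n + 1), minMonicNorm μ (j : ℕ) := by
  classical
  have hpos : ∀ j : Fin (n + 1), 0 < minMonicNorm μ (j : ℕ) :=
    fun j => minMonicNorm_pos μ hmom hsupp (j : ℕ)
  refine ⟨hpos, ?_, Finset.prod_pos fun j _ => hpos j⟩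
  set v : ℕ → Lp ℂ 2 μ := vFam μ hmom with hv
  set g : ℕ → Lp ℂ 2 μ := gFam μ hmom with hg
  -- representation of v in terms of g with unitriangular coefficients
  have hrange : ∀ j : ℕ, Set.range (fun i : Fin j => g (i : ℕ)) = g '' Set.Iio j := by
    intro j
    ext x
    simp only [Set.mem_range, Set.mem_image, Set.mem_Iio]
    constructor
    · rintro ⟨i, rfl⟩; exact ⟨(i : ℕ), i.isLt, rfl⟩
    · rintro ⟨k, hk, rfl⟩; exact ⟨⟨k, hk⟩, rfl⟩
  have hrep : ∀ j : Fin (n + 1), ∃ a : Fin (n + 1) → ℂ,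
      (∀ i : Fin (n + 1), ¬((i : ℕ) < (j : ℕ)) → a i = 0) ∧
      v (j : ℕ) = g (j : ℕ) + ∑ i : Fin (n + 1), a i • g (i : ℕ) := by
    intro j
    have h1 : v (j : ℕ) - g (j : ℕ) ∈ span ℂ (g '' Set.Iio (j : ℕ)) := by
      rw [hg, hv, gFam_def, span_gramSchmidt_Iio ℂ (vFam μ hmom) (j : ℕ),
        ← gFam_def]
      exact sub_gS_mem μ hmom (j : ℕ)
    rw [← hrange, mem_span_range_iff_exists_fun] at h1
    obtain ⟨c, hc⟩ := h1
    refine ⟨fun i => if h : (i : ℕ) < (j : ℕ) then c ⟨(i : ℕ), h⟩ else 0,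
      fun i hi => by simp [hi], ?_⟩
    have hsum : (∑ i : Fin (n + 1),
          (if h : (i : ℕ) < (j : ℕ) then c ⟨(i : ℕ), h⟩ else 0) • g (i : ℕ))
        = ∑ i : Fin ((j : ℕ)), c i • g (i : ℕ) := by
      set F : ℕ → Lp ℂ 2 μ := fun k => if h : k < (j : ℕ) then c ⟨k, h⟩ • g k else 0 with hF
      have hL : (∑ i : Fin (n + 1),
            (if h : (i : ℕ) < (j : ℕ) then c ⟨(i : ℕ), h⟩ else 0) • g (i : ℕ))
          = ∑ i : Fin (n + 1), F (i : ℕ) := by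
        refine Finset.sum_congr rfl fun i _ => ?_
        by_cases h : (i : ℕ) < (j : ℕ)
        · simp [hF, h]
        · simp [hF, h]
      have hR : (∑ i : Fin ((j : ℕ)), c i • g (i : ℕ)) = ∑ i : Fin ((j : ℕ)), F (i : ℕ) := by
        refine Finset.sum_congr rfl fun i _ => ?_
        simp [hF, i.isLt]
      rw [hL, hR, Fin.sum_univ_eq_sum_range F (n + 1), Fin.sum_univ_eq_sum_range F (j : ℕ)]
      symm
      refine Finset.sum_subset ?_ ?_
      · exact Finset.range_subset_range.2 (le_of_lt j.isLt)
      · intro k _ hk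
        rw [Finset.mem_range, not_lt] at hk
        simp [hF, not_lt.2 hk]
    rw [hsum, hc]
    abel
  choose a ha0 harep using hrep
  set T : Matrix (Fin (n + 1)) (Fin (n + 1)) ℂ :=
    fun j i => (if i = j then (1 : ℂ) else 0) + a j i with hT
  have hTdiag : ∀ j, T j j = 1 := by
    intro j
    simp [hT, ha0 j j (lt_irrefl _)]
  have hTtri : ∀ i j : Fin (n + 1), i < j → T i j = 0 := by
    intro i j hij
    have h1 : j ≠ i := ne_of_gt hij
    have h2 : ¬((j : ℕ) < (i : ℕ)) := not_lt.2 (le_of_lt hij)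
    simp [hT, h1, ha0 i j h2]
  have hvT : ∀ j : Fin (n + 1), v (j : ℕ) = ∑ i : Fin (n + 1), T j i • g (i : ℕ) := by
    intro j
    rw [harep j, hT]
    simp only [add_smul, Finset.sum_add_distrib]
    congr 1
    have hite : ∀ x : Fin (n + 1),
        (if x = j then (1 : ℂ) else 0) • g (x : ℕ) = if x = j then g (x : ℕ) else 0 :=
      fun x => by split <;> simp
    rw [Finset.sum_congr rfl fun x _ => hite x,
      Finset.sum_ite_eq' Finset.univ j (fun x => g (x : ℕ))]
    simp
  set d : Fin (n + 1) → ℂ := fun i => @inner ℂ _ _ (g (i : ℕ)) (g (i : ℕ)) with hd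
  have horth : ∀ i l : Fin (n + 1), l ≠ i →
      @inner ℂ _ _ (g (i : ℕ)) (g (l : ℕ)) = 0 := by
    intro i l hl
    rw [hg, gFam_def]
    refine gramSchmidt_orthogonal ℂ (vFam μ hmom) ?_
    intro hEq
    exact hl ((Fin.val_injective hEq).symm)
  have hMfact : M = T * Matrix.diagonal d * T.conjTranspose := by
    ext j k
    have hMv : M j k = @inner ℂ _ _ (v (k : ℕ)) (v (j : ℕ)) := by
      rw [hM j k, hv]
      show _ = @inner ℂ _ _ (P2 μ hmom ((X : Polynomial ℂ) ^ (k : ℕ)))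
        (P2 μ hmom ((X : Polynomial ℂ) ^ (j : ℕ)))
      rw [inner_P2]
      refine integral_congr_ae (Filter.Eventually.of_forall fun z => ?_)
      simp [map_pow, mul_comm]
    rw [hMv, hvT j, hvT k, sum_inner]
    have hterm : ∀ i : Fin (n + 1),
        @inner ℂ _ _ (T k i • g (i : ℕ)) (∑ l : Fin (n + 1), T j l • g (l : ℕ))
          = (starRingEnd ℂ) (T k i) * (T j i * d i) := by
      intro i
      rw [inner_smul_left, inner_sum]
      congr 1
      rw [Finset.sum_congr rfl fun l _ => inner_smul_right (𝕜 := ℂ) _ _ _]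
      rw [Finset.sum_eq_single i (fun l _ hl => by rw [horth i l hl, mul_zero])
        (fun h => absurd (Finset.mem_univ i) h)]
    rw [Finset.sum_congr rfl fun i _ => hterm i, Matrix.mul_apply]
    simp only [Matrix.mul_diagonal, Matrix.conjTranspose_apply, RCLike.star_def]
    refine Finset.sum_congr rfl fun i _ => ?_
    ring
  have hdetT : T.det = 1 := by
    have htri : T.BlockTriangular (OrderDual.toDual : Fin (n + 1) → (Fin (n + 1))ᵒᵈ) := by
      intro i j hij
      exact hTtri i j hij
    rw [Matrix.det_of_lowerTriangular T htri]
    simp [hTdiag]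
  have hdval : ∀ i : Fin (n + 1), d i = ((minMonicNorm μ (i : ℕ) : ℝ) : ℂ) := by
    intro i
    have h1 : d i = ((‖g (i : ℕ)‖ : ℂ)) ^ 2 := inner_self_eq_norm_sq_to_K _
    rw [h1, minMonicNorm_eq μ hmom (i : ℕ)]
    push_cast
    rfl
  rw [hMfact, Matrix.det_mul, Matrix.det_mul, hdetT, Matrix.det_conjTranspose, hdetT,
    Matrix.det_diagonal]
  simp only [one_mul, star_one, mul_one]
  exact Finset.prod_congr rfl fun i _ => hdval i
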